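/- Let A = (aᵢⱼ) be an m×m matrix over a commutative ring R and B, C be m×N matrices with B ≡ A·C modulo an ideal I (entrywise). If some m×m minor of C is a unit modulo I, then the ideal generated by all m×m minors of B together with I equals the ideal generated by det(A) and I: I_m(B) + I = (det A) + I. -/
import Mathlib


/-- The ideal generated by the `m×m` minors of an `m×N` matrix `B`. -/
def maxMinorsIdeal {R : Type*} [CommRing R] (m N : ℕ) (B : Matrix (Fin m) (Fin N) R) :
    Ideal R :=
  Ideal.span {x | ∃ s : Fin m → Fin N, Function.Injective s ∧ x = (B.submatrix id s).det}

/-- If `B ≡ A·C` modulo an ideal `I` entrywise and some `m×m` minor of `C` is invertible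
modulo `I`, then `I_m(B) + I = (det A) + I`. -/
theorem stmt_12 {R : Type*} [CommRing R] (m N : ℕ) (I : Ideal R)
    (A : Matrix (Fin m) (Fin m) R) (B C : Matrix (Fin m) (Fin N) R)
    (hBAC : ∀ i j, (B - A * C) i j ∈ I)
    (hC : ∃ s : Fin m → Fin N, Function.Injective s ∧
      IsUnit (Ideal.Quotient.mk I ((C.submatrix id s).det))) :
    maxMinorsIdeal m N B ⊔ I = Ideal.span {A.det} ⊔ I := by
  obtain ⟨s₀, hs₀, hu⟩ := hC
  have key : ∀ s : Fin m → Fin N, Ideal.Quotient.mk I ((B.submatrix id s).det)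
      = Ideal.Quotient.mk I (A.det * (C.submatrix id s).det) := by
    intro s
    have h1 : ((B.submatrix id s).map (Ideal.Quotient.mk I)) =
        (((A * C).submatrix id s).map (Ideal.Quotient.mk I)) := by
      ext i j
      simp only [Matrix.map_apply, Matrix.submatrix_apply, id]
      rw [Ideal.Quotient.mk_eq_mk_iff_sub_mem]
      have := hBAC i (s j)
      simpa [Matrix.sub_apply] using this
    have h2 : (A * C).submatrix id s = A * (C.submatrix id s) := by
      ext i j; simp [Matrix.mul_apply]
    rw [RingHom.map_det]; simp only [RingHom.mapMatrix_apply]; rw [h1, ← RingHom.mapMatrix_apply, ← RingHom.map_det, h2, Matrix.det_mul]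
  apply le_antisymm
  · apply sup_le _ le_sup_right
    rw [maxMinorsIdeal, Ideal.span_le]
    rintro x ⟨s, hs, rfl⟩
    have h := key s
    rw [Ideal.Quotient.mk_eq_mk_iff_sub_mem] at h
    have : (B.submatrix id s).det =
        A.det * (C.submatrix id s).det +
          ((B.submatrix id s).det - A.det * (C.submatrix id s).det) := by ring
    rw [this]
    exact Submodule.add_mem_sup
      (Ideal.mem_span_singleton.2 ⟨(C.submatrix id s).det, rfl⟩) h
  · apply sup_le _ le_sup_right
    rw [Ideal.span_le]
    rintro x hx
    rw [Set.mem_singleton_iff] at hx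
    subst hx
    obtain ⟨r, hr⟩ := Ideal.Quotient.mk_surjective ((hu.unit⁻¹ : Units _) : R ⧸ I)
    have h : Ideal.Quotient.mk I A.det
        = Ideal.Quotient.mk I ((B.submatrix id s₀).det * r) := by
      rw [map_mul, key s₀, map_mul, hr, mul_assoc]
      simp [IsUnit.mul_val_inv, hu.mul_val_inv]
    rw [Ideal.Quotient.mk_eq_mk_iff_sub_mem] at h
    have : A.det = (B.submatrix id s₀).det * r
        + (A.det - (B.submatrix id s₀).det * r) := by ring
    rw [this]
    refine Submodule.add_mem_sup ?_ h
    exact Ideal.mul_mem_right _ _ (Ideal.subset_span ⟨s₀, hs₀, rfl⟩)
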